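/- arXiv:1812.10104 — 3 statements merged into one kernel-verified Lean document; each statement's English description precedes it below -/
import Mathlib

section
/- The differential of the relative atomic complex squares to zero: for every subset σ of atoms, ∂(∂σ) = 0, where ∂σ = Σ_j (-1)^j (σ \ {a_{i_j}}) with the sum over indices j such that join(σ \ {a_{i_j}}) = join(σ). -/
open Classical Finset

/-- The differential of the relative atomic complex on the basis element `σ`:
`∂σ = Σ_j (-1)^j (σ \ {a_{i_j}})`, summed over those `j ∈ σ` whose removal does
not change the join. -/
noncomputable def atomicBdry {α : Type*} [Lattice α] [OrderBot α] {N : ℕ}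
    (a : Fin N → α) (σ : Finset (Fin N)) : Finset (Fin N) →₀ ℤ :=
  ∑ j ∈ σ.filter (fun j => (σ.erase j).sup a = σ.sup a),
    ((-1 : ℤ) ^ ((σ.filter (· < j)).card)) • Finsupp.single (σ.erase j) (1 : ℤ)

/-- The differential of the relative atomic complex, as a linear endomorphism of
the free abelian group on subsets of atoms. -/
noncomputable def atomicD {α : Type*} [Lattice α] [OrderBot α] {N : ℕ}
    (a : Fin N → α) : (Finset (Fin N) →₀ ℤ) →ₗ[ℤ] (Finset (Fin N) →₀ ℤ) :=
  Finsupp.lsum ℤ fun σ =>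
    LinearMap.toSpanSingleton ℤ (Finset (Fin N) →₀ ℤ) (atomicBdry a σ)

section aux
variable {α : Type*} [Lattice α] [OrderBot α] {N : ℕ} (a : Fin N → α)

lemma atomicD_single (σ : Finset (Fin N)) :
    atomicD a (Finsupp.single σ (1:ℤ)) = atomicBdry a σ := by
  simp [atomicD, Finsupp.lsum_single, LinearMap.toSpanSingleton_apply]

lemma sup_sandwich {σ τ ρ : Finset (Fin N)} (h1 : σ ⊆ τ) (h2 : τ ⊆ ρ)
    (h : σ.sup a = ρ.sup a) : τ.sup a = ρ.sup a :=
  le_antisymm (Finset.sup_mono h2) (h ▸ Finset.sup_mono h1)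

-- the inner index count after an erase
lemma count_erase (σ : Finset (Fin N)) (i j : Fin N) :
    ((σ.erase j).filter (· < i)).card =
      ((σ.filter (· < i)).erase j).card := by
  rw [Finset.filter_erase]

lemma count_erase_of_lt (σ : Finset (Fin N)) {i j : Fin N} (hj : j ∈ σ) (h : j < i) :
    ((σ.erase j).filter (· < i)).card = ((σ.filter (· < i))).card - 1 := by
  rw [count_erase, Finset.card_erase_of_mem (by simp [hj, h])]

lemma count_erase_of_not_lt (σ : Finset (Fin N)) {i j : Fin N} (h : ¬ j < i) :
    ((σ.erase j).filter (· < i)).card = ((σ.filter (· < i))).card := by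
  rw [count_erase, Finset.erase_eq_of_notMem (by simp [h])]

lemma key (σ : Finset (Fin N)) : atomicD a (atomicBdry a σ) = 0 := by
  rw [atomicBdry, map_sum]
  simp only [map_zsmul, atomicD_single]
  have expand : ∀ j : Fin N, ((-1:ℤ) ^ (σ.filter (· < j)).card) • atomicBdry a (σ.erase j)
      = ∑ i ∈ (σ.erase j).filter (fun i => ((σ.erase j).erase i).sup a = (σ.erase j).sup a),
          ((-1:ℤ) ^ (σ.filter (· < j)).card) •
            (((-1:ℤ) ^ ((σ.erase j).filter (· < i)).card) • Finsupp.single ((σ.erase j).erase i) (1:ℤ)) := by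
    intro j; rw [atomicBdry, Finset.smul_sum]
  rw [Finset.sum_congr rfl (fun j _ => expand j)]
  rw [Finset.sum_sigma']
  -- notation
  set F : Finset (Fin N) → Finset (Fin N) :=
    fun τ => τ.filter (fun j => (τ.erase j).sup a = τ.sup a) with hF
  refine Finset.sum_involution (fun p _ => ⟨p.2, p.1⟩) ?_ ?_ ?_ ?_
  · rintro ⟨j, i⟩ hp
    simp only [Finset.mem_sigma, hF, Finset.mem_filter, Finset.mem_erase] at hp
    obtain ⟨⟨hjσ, hj⟩, ⟨hij, hiσ⟩, hi⟩ := hp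
    have hji : j ≠ i := fun h => hij h.symm
    have hcomm : (σ.erase j).erase i = (σ.erase i).erase j := Finset.erase_right_comm
    have hsup : ((σ.erase j).erase i).sup a = σ.sup a := hi.trans hj
    -- sign computation
    rcases lt_or_gt_of_ne hij with h | h
    · -- i < j
      have e1 : ((σ.erase j).filter (· < i)).card = (σ.filter (· < i)).card :=
        count_erase_of_not_lt σ (by exact fun hc => absurd (hc.trans h) (lt_irrefl j))
      have hi' : i ∈ σ.filter (· < j) := by simp [hiσ, h]
      have e2 : ((σ.erase i).filter (· < j)).card = (σ.filter (· < j)).card - 1 :=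
        count_erase_of_lt σ hiσ h
      have hpos : 0 < (σ.filter (· < j)).card := Finset.card_pos.2 ⟨i, hi'⟩
      obtain ⟨k, hk⟩ : ∃ k, (σ.filter (· < j)).card = k + 1 :=
        ⟨(σ.filter (· < j)).card - 1, (Nat.succ_pred_eq_of_pos hpos).symm⟩
      rw [hcomm] at *
      simp only [e1, e2, hk, Nat.add_sub_cancel]
      rw [smul_smul, smul_smul, ← add_smul]
      convert zero_smul ℤ _
      ring
    · -- j < i
      have e1 : ((σ.erase j).filter (· < i)).card = (σ.filter (· < i)).card - 1 :=
        count_erase_of_lt σ hjσ h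
      have e2 : ((σ.erase i).filter (· < j)).card = (σ.filter (· < j)).card :=
        count_erase_of_not_lt σ (by exact fun hc => absurd (hc.trans h) (lt_irrefl i))
      have hj' : j ∈ σ.filter (· < i) := by simp [hjσ, h]
      have hpos : 0 < (σ.filter (· < i)).card := Finset.card_pos.2 ⟨j, hj'⟩
      obtain ⟨k, hk⟩ : ∃ k, (σ.filter (· < i)).card = k + 1 :=
        ⟨(σ.filter (· < i)).card - 1, (Nat.succ_pred_eq_of_pos hpos).symm⟩
      rw [hcomm] at *
      simp only [e1, e2, hk, Nat.add_sub_cancel]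
      rw [smul_smul, smul_smul, ← add_smul]
      convert zero_smul ℤ _
      ring
  · rintro ⟨j, i⟩ hp _
    simp only [Finset.mem_sigma, hF, Finset.mem_filter, Finset.mem_erase] at hp
    intro h
    exact hp.2.1.1 (congrArg Sigma.fst h)
  · rintro ⟨j, i⟩ hp
    simp only [Finset.mem_sigma, hF, Finset.mem_filter, Finset.mem_erase] at hp ⊢
    obtain ⟨⟨hjσ, hj⟩, ⟨hij, hiσ⟩, hi⟩ := hp
    have hsup : ((σ.erase j).erase i).sup a = σ.sup a := hi.trans hj
    have hcomm : (σ.erase j).erase i = (σ.erase i).erase j := Finset.erase_right_comm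
    have hi' : (σ.erase i).sup a = σ.sup a :=
      sup_sandwich a (hcomm ▸ Finset.erase_subset _ _) (Finset.erase_subset _ _) hsup
    refine ⟨⟨hiσ, hi'⟩, ⟨fun h => hij h.symm, hjσ⟩, ?_⟩
    rw [← hcomm, hsup, hi']
  · rintro ⟨j, i⟩ hp
    rfl

end aux

/-- The differential of the relative atomic complex squares to zero. -/
theorem stmt_6 {α : Type*} [Lattice α] [OrderBot α] [Fintype α] {N : ℕ}
    (a : Fin N → α) (ha : ∀ i, IsAtom (a i)) :
    (atomicD a).comp (atomicD a) = 0 := by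
  apply Finsupp.lhom_ext'
  intro σ
  apply LinearMap.ext_ring
  simp [LinearMap.comp_apply, atomicD_single, key]
end

section
/- The cohomology of the DGA D̃ for the four-plane arrangement of the example, with Z/2 coefficients, satisfies: H^0(D̃) ≅ Z/2, H^1(D̃) ≅ (Z/2)^9, and H^k(D̃) = 0 for k ≥ 2. -/
open Classical Finset Module

/-- The four planes of the example (indices `0,1,2,3` stand for `H₁,…,H₄`). -/
def planeSet : Fin 4 → Set (Fin 4 → ℝ)
  | 0 => {v | v 0 = v 2 ∧ v 1 = v 3}
  | 1 => {v | v 0 = v 2 ∧ v 1 = -v 3}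
  | 2 => {v | v 0 = -v 2 ∧ v 1 = -v 3}
  | 3 => {v | v 0 = -v 2 ∧ v 1 = v 3}

/-- The coboundary of `D̃` over `ℤ/2` on a basis element. -/
noncomputable def dualBdry {W : Type*} [AddCommGroup W] [Module ℝ W] {N : ℕ}
    (H : Fin N → Submodule ℝ W) (σ : Finset (Fin N)) : Finset (Fin N) →₀ ZMod 2 :=
  ∑ j ∈ σ.filter (fun j => (σ.erase j).inf H = σ.inf H),
    Finsupp.single (σ.erase j) (1 : ZMod 2)

/-- The coboundary `δ` of `D̃` as a `ℤ/2`-linear endomorphism. -/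
noncomputable def dualD {W : Type*} [AddCommGroup W] [Module ℝ W] {N : ℕ}
    (H : Fin N → Submodule ℝ W) :
    (Finset (Fin N) →₀ ZMod 2) →ₗ[ZMod 2] (Finset (Fin N) →₀ ZMod 2) :=
  Finsupp.lsum (ZMod 2) fun σ =>
    LinearMap.toSpanSingleton (ZMod 2) (Finset (Fin N) →₀ ZMod 2) (dualBdry H σ)

/-- The degree `deg σ = dim W − |σ| − dim (join σ)` of a basis element of `D̃`. -/
noncomputable def dualDeg {W : Type*} [AddCommGroup W] [Module ℝ W] {N : ℕ}
    (H : Fin N → Submodule ℝ W) (σ : Finset (Fin N)) : ℤ :=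
  (finrank ℝ W : ℤ) - σ.card - finrank ℝ ↥(σ.inf H)

/-- The degree-`k` component of `D̃`. -/
noncomputable def dualComp {W : Type*} [AddCommGroup W] [Module ℝ W] {N : ℕ}
    (H : Fin N → Submodule ℝ W) (k : ℤ) :
    Submodule (ZMod 2) (Finset (Fin N) →₀ ZMod 2) :=
  Finsupp.supported (ZMod 2) (ZMod 2) {σ | dualDeg H σ = k}

/-- The degree-`k` cocycles of `D̃`. -/
noncomputable def dualZ {W : Type*} [AddCommGroup W] [Module ℝ W] {N : ℕ}
    (H : Fin N → Submodule ℝ W) (k : ℤ) :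
    Submodule (ZMod 2) (Finset (Fin N) →₀ ZMod 2) :=
  dualComp H k ⊓ LinearMap.ker (dualD H)

/-- The degree-`k` coboundaries of `D̃`. -/
noncomputable def dualB {W : Type*} [AddCommGroup W] [Module ℝ W] {N : ℕ}
    (H : Fin N → Submodule ℝ W) (k : ℤ) :
    Submodule (ZMod 2) (Finset (Fin N) →₀ ZMod 2) :=
  dualComp H k ⊓ Submodule.map (dualD H) (dualComp H (k - 1))

/-- The degree-`k` cohomology `H^k(D̃)` = cocycles modulo coboundaries. -/
noncomputable abbrev dualH {W : Type*} [AddCommGroup W] [Module ℝ W] {N : ℕ}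
    (H : Fin N → Submodule ℝ W) (k : ℤ) :=
  @HasQuotient.Quotient ↥(dualZ H k) (Submodule (ZMod 2) ↥(dualZ H k))
    Submodule.hasQuotient (Submodule.comap (dualZ H k).subtype (dualB H k))

lemma finrank_of_ker {m : ℕ} (S : Submodule ℝ (Fin 4 → ℝ)) (f : (Fin 4 → ℝ) →ₗ[ℝ] (Fin m → ℝ))
    (h : ∀ v, v ∈ S ↔ f v = 0) (hf : Function.Surjective f) :
    finrank ℝ S = 4 - m := by
  have hS : S = LinearMap.ker f := by ext v; rw [h]; exact (LinearMap.mem_ker).symm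
  rw [hS]
  have h2 := LinearMap.finrank_range_add_finrank_ker f
  rw [LinearMap.range_eq_top.2 hf] at h2
  simp only [finrank_top, Module.finrank_pi, Fintype.card_fin] at h2
  omega

noncomputable abbrev pr (i : Fin 4) : (Fin 4 → ℝ) →ₗ[ℝ] ℝ := LinearMap.proj i

def rnk (σ : Finset (Fin 4)) : ℕ :=
  if σ = ∅ then 4 else if σ.card = 1 then 2
  else if σ = {0,1} ∨ σ = {1,2} ∨ σ = {2,3} ∨ σ = {0,3} then 1 else 0

section
variable (H : Fin 4 → Submodule ℝ (Fin 4 → ℝ)) (hH : ∀ i, (H i : Set (Fin 4 → ℝ)) = planeSet i)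

include hH

lemma memH (i : Fin 4) (v : Fin 4 → ℝ) : v ∈ H i ↔ v ∈ planeSet i := by
  rw [← SetLike.mem_coe, hH]

lemma memInf (σ : Finset (Fin 4)) (v : Fin 4 → ℝ) :
    v ∈ σ.inf H ↔ ∀ i ∈ σ, v ∈ planeSet i := by
  rw [Submodule.mem_finsetInf]
  exact forall₂_congr fun i _ => memH H hH i v

lemma rank_single (i : Fin 4) : finrank ℝ (H i) = 2 := by
  fin_cases i
  · exact finrank_of_ker _ (LinearMap.pi ![pr 0 - pr 2, pr 1 - pr 3])
      (fun v => by rw [memH H hH]; simp [planeSet, funext_iff, Fin.forall_fin_two, sub_eq_zero])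
      (fun w => ⟨![w 0, w 1, 0, 0], by funext j; fin_cases j <;> simp⟩)
  · exact finrank_of_ker _ (LinearMap.pi ![pr 0 - pr 2, pr 1 + pr 3])
      (fun v => by rw [memH H hH]; simp [planeSet, funext_iff, Fin.forall_fin_two, sub_eq_zero,
        add_eq_zero_iff_eq_neg])
      (fun w => ⟨![w 0, w 1, 0, 0], by funext j; fin_cases j <;> simp⟩)
  · exact finrank_of_ker _ (LinearMap.pi ![pr 0 + pr 2, pr 1 + pr 3])
      (fun v => by rw [memH H hH]; simp [planeSet, funext_iff, Fin.forall_fin_two,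
        add_eq_zero_iff_eq_neg])
      (fun w => ⟨![w 0, w 1, 0, 0], by funext j; fin_cases j <;> simp⟩)
  · exact finrank_of_ker _ (LinearMap.pi ![pr 0 + pr 2, pr 1 - pr 3])
      (fun v => by rw [memH H hH]; simp [planeSet, funext_iff, Fin.forall_fin_two, sub_eq_zero,
        add_eq_zero_iff_eq_neg])
      (fun w => ⟨![w 0, w 1, 0, 0], by funext j; fin_cases j <;> simp⟩)
end

section
variable (H : Fin 4 → Submodule ℝ (Fin 4 → ℝ)) (hH : ∀ i, (H i : Set (Fin 4 → ℝ)) = planeSet i)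
include hH

lemma inf_02 : ({0,2} : Finset (Fin 4)).inf H = ⊥ := by
  rw [eq_bot_iff]
  intro v hv
  rw [memInf H hH] at hv
  have h0 := hv 0 (by decide)
  have h2 := hv 2 (by decide)
  simp [planeSet] at h0 h2
  simp only [Submodule.mem_bot]
  funext i; fin_cases i <;> (simp; linarith [h0.1, h0.2, h2.1, h2.2])

lemma inf_13 : ({1,3} : Finset (Fin 4)).inf H = ⊥ := by
  rw [eq_bot_iff]
  intro v hv
  rw [memInf H hH] at hv
  have h0 := hv 1 (by decide)
  have h2 := hv 3 (by decide)
  simp [planeSet] at h0 h2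
  simp only [Submodule.mem_bot]
  funext i; fin_cases i <;> (simp; linarith [h0.1, h0.2, h2.1, h2.2])

lemma inf_bot_of_subset (σ : Finset (Fin 4))
    (h : ({0,2} : Finset (Fin 4)) ⊆ σ ∨ ({1,3} : Finset (Fin 4)) ⊆ σ) : σ.inf H = ⊥ := by
  rw [eq_bot_iff]
  rcases h with h | h
  · rw [← inf_02 H hH]; exact Finset.inf_mono h
  · rw [← inf_13 H hH]; exact Finset.inf_mono h

lemma rank_pair01 : finrank ℝ ↥(({0,1} : Finset (Fin 4)).inf H) = 1 := by
  refine finrank_of_ker _ (LinearMap.pi ![pr 0 - pr 2, pr 1, pr 3]) (fun v => ?_)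
    (fun w => ⟨![w 0, w 1, 0, w 2], by funext j; fin_cases j <;> simp⟩)
  rw [memInf H hH]
  simp [planeSet, funext_iff, Fin.forall_fin_succ, Fin.forall_fin_two, sub_eq_zero,
    Finset.forall_mem_insert]
  constructor
  · rintro ⟨⟨h1, h2⟩, h3, h4⟩; refine ⟨h1, by linarith, by linarith⟩
  · rintro ⟨h1, h2, h3⟩; exact ⟨⟨h1, by linarith⟩, h1, by linarith⟩

lemma rank_pair12 : finrank ℝ ↥(({1,2} : Finset (Fin 4)).inf H) = 1 := by
  refine finrank_of_ker _ (LinearMap.pi ![pr 0, pr 2, pr 1 + pr 3]) (fun v => ?_)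
    (fun w => ⟨![w 0, w 2, w 1, 0], by funext j; fin_cases j <;> simp⟩)
  rw [memInf H hH]
  simp [planeSet, funext_iff, Fin.forall_fin_succ, Fin.forall_fin_two, sub_eq_zero,
    add_eq_zero_iff_eq_neg, Finset.forall_mem_insert]
  constructor
  · rintro ⟨⟨h1, h2⟩, h3, h4⟩; refine ⟨by linarith, by linarith, by linarith⟩
  · rintro ⟨h1, h2, h3⟩; exact ⟨⟨by linarith, by linarith⟩, by linarith, by linarith⟩

lemma rank_pair23 : finrank ℝ ↥(({2,3} : Finset (Fin 4)).inf H) = 1 := by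
  refine finrank_of_ker _ (LinearMap.pi ![pr 0 + pr 2, pr 1, pr 3]) (fun v => ?_)
    (fun w => ⟨![w 0, w 1, 0, w 2], by funext j; fin_cases j <;> simp⟩)
  rw [memInf H hH]
  simp [planeSet, funext_iff, Fin.forall_fin_succ, Fin.forall_fin_two, sub_eq_zero,
    add_eq_zero_iff_eq_neg, Finset.forall_mem_insert]
  constructor
  · rintro ⟨⟨h1, h2⟩, h3, h4⟩; refine ⟨by linarith, by linarith, by linarith⟩
  · rintro ⟨h1, h2, h3⟩; exact ⟨⟨by linarith, by linarith⟩, by linarith, by linarith⟩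

lemma rank_pair03 : finrank ℝ ↥(({0,3} : Finset (Fin 4)).inf H) = 1 := by
  refine finrank_of_ker _ (LinearMap.pi ![pr 0, pr 2, pr 1 - pr 3]) (fun v => ?_)
    (fun w => ⟨![w 0, w 2, w 1, 0], by funext j; fin_cases j <;> simp⟩)
  rw [memInf H hH]
  simp [planeSet, funext_iff, Fin.forall_fin_succ, Fin.forall_fin_two, sub_eq_zero,
    add_eq_zero_iff_eq_neg, Finset.forall_mem_insert]
  constructor
  · rintro ⟨⟨h1, h2⟩, h3, h4⟩; refine ⟨by linarith, by linarith, by linarith⟩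
  · rintro ⟨h1, h2, h3⟩; exact ⟨⟨by linarith, by linarith⟩, by linarith, by linarith⟩

lemma rank_inf (σ : Finset (Fin 4)) : finrank ℝ ↥(σ.inf H) = rnk σ := by
  have h16 : σ = ∅ ∨ σ = {0} ∨ σ = {1} ∨ σ = {2} ∨ σ = {3} ∨
      σ = {0,1} ∨ σ = {0,2} ∨ σ = {0,3} ∨ σ = {1,2} ∨ σ = {1,3} ∨ σ = {2,3} ∨
      σ = {0,1,2} ∨ σ = {0,1,3} ∨ σ = {0,2,3} ∨ σ = {1,2,3} ∨ σ = {0,1,2,3} := by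
    revert σ; decide
  have hb : ∀ τ : Finset (Fin 4),
      (({0,2} : Finset (Fin 4)) ⊆ τ ∨ ({1,3} : Finset (Fin 4)) ⊆ τ) →
      finrank ℝ ↥(τ.inf H) = 0 := by
    intro τ hτ; rw [inf_bot_of_subset H hH τ hτ, finrank_bot]
  rcases h16 with h|h|h|h|h|h|h|h|h|h|h|h|h|h|h|h <;> subst h
  · rw [show rnk ∅ = 4 by decide, Finset.inf_empty, finrank_top]; simp [Module.finrank_pi]
  · rw [show rnk {0} = 2 by decide, Finset.inf_singleton]; exact rank_single H hH 0
  · rw [show rnk {1} = 2 by decide, Finset.inf_singleton]; exact rank_single H hH 1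
  · rw [show rnk {2} = 2 by decide, Finset.inf_singleton]; exact rank_single H hH 2
  · rw [show rnk {3} = 2 by decide, Finset.inf_singleton]; exact rank_single H hH 3
  · rw [show rnk {0,1} = 1 by decide]; exact rank_pair01 H hH
  · rw [show rnk {0,2} = 0 by decide]; exact hb _ (Or.inl (by decide))
  · rw [show rnk {0,3} = 1 by decide]; exact rank_pair03 H hH
  · rw [show rnk {1,2} = 1 by decide]; exact rank_pair12 H hH
  · rw [show rnk {1,3} = 0 by decide]; exact hb _ (Or.inr (by decide))
  · rw [show rnk {2,3} = 1 by decide]; exact rank_pair23 H hH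
  · rw [show rnk {0,1,2} = 0 by decide]; exact hb _ (Or.inl (by decide))
  · rw [show rnk {0,1,3} = 0 by decide]; exact hb _ (Or.inr (by decide))
  · rw [show rnk {0,2,3} = 0 by decide]; exact hb _ (Or.inl (by decide))
  · rw [show rnk {1,2,3} = 0 by decide]; exact hb _ (Or.inr (by decide))
  · rw [show rnk {0,1,2,3} = 0 by decide]; exact hb _ (Or.inl (by decide))
end

def ddeg (σ : Finset (Fin 4)) : ℤ := 4 - σ.card - rnk σ

section
variable (H : Fin 4 → Submodule ℝ (Fin 4 → ℝ)) (hH : ∀ i, (H i : Set (Fin 4 → ℝ)) = planeSet i)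
include hH

lemma deg_eq (σ : Finset (Fin 4)) : dualDeg H σ = ddeg σ := by
  rw [dualDeg, ddeg, rank_inf H hH, Module.finrank_pi]
  norm_num

lemma bdry_eq (σ : Finset (Fin 4)) :
    dualBdry H σ = ∑ j ∈ σ.filter (fun j => rnk (σ.erase j) = rnk σ),
      Finsupp.single (σ.erase j) (1 : ZMod 2) := by
  rw [dualBdry]
  congr 1
  refine Finset.filter_congr fun j hj => ?_
  constructor
  · intro h
    rw [← rank_inf H hH, ← rank_inf H hH, h]
  · intro h
    have key : ∀ τ : Finset (Fin 4), ∀ j ∈ τ, rnk (τ.erase j) = rnk τ → rnk τ = 0 := by decide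
    have h0 : rnk σ = 0 := key σ j hj h
    have h1 : finrank ℝ ↥(σ.inf H) = 0 := by rw [rank_inf H hH, h0]
    have h2 : finrank ℝ ↥((σ.erase j).inf H) = 0 := by rw [rank_inf H hH, h, h0]
    rw [Submodule.finrank_eq_zero.1 h1, Submodule.finrank_eq_zero.1 h2]

lemma bdry_t012 : dualBdry H {0,1,2} = Finsupp.single {0,2} (1 : ZMod 2) := by
  rw [bdry_eq H hH, show ({0,1,2} : Finset (Fin 4)).filter
    (fun j => rnk (({0,1,2} : Finset (Fin 4)).erase j) = rnk {0,1,2}) = {1} by decide,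
    Finset.sum_singleton, show ({0,1,2} : Finset (Fin 4)).erase 1 = {0,2} by decide]

lemma bdry_t023 : dualBdry H {0,2,3} = Finsupp.single {0,2} (1 : ZMod 2) := by
  rw [bdry_eq H hH, show ({0,2,3} : Finset (Fin 4)).filter
    (fun j => rnk (({0,2,3} : Finset (Fin 4)).erase j) = rnk {0,2,3}) = {3} by decide,
    Finset.sum_singleton, show ({0,2,3} : Finset (Fin 4)).erase 3 = {0,2} by decide]

lemma bdry_t013 : dualBdry H {0,1,3} = Finsupp.single {1,3} (1 : ZMod 2) := by
  rw [bdry_eq H hH, show ({0,1,3} : Finset (Fin 4)).filter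
    (fun j => rnk (({0,1,3} : Finset (Fin 4)).erase j) = rnk {0,1,3}) = {0} by decide,
    Finset.sum_singleton, show ({0,1,3} : Finset (Fin 4)).erase 0 = {1,3} by decide]

lemma bdry_t123 : dualBdry H {1,2,3} = Finsupp.single {1,3} (1 : ZMod 2) := by
  rw [bdry_eq H hH, show ({1,2,3} : Finset (Fin 4)).filter
    (fun j => rnk (({1,2,3} : Finset (Fin 4)).erase j) = rnk {1,2,3}) = {2} by decide,
    Finset.sum_singleton, show ({1,2,3} : Finset (Fin 4)).erase 2 = {1,3} by decide]

lemma bdry_zero (σ : Finset (Fin 4))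
    (hσ : σ ∉ ({{0,1,2},{0,2,3},{0,1,3},{1,2,3},{0,1,2,3}} : Finset (Finset (Fin 4)))) :
    dualBdry H σ = 0 := by
  rw [bdry_eq H hH]
  have : σ.filter (fun j => rnk (σ.erase j) = rnk σ) = ∅ := by
    have key : ∀ τ : Finset (Fin 4),
        τ ∉ ({{0,1,2},{0,2,3},{0,1,3},{1,2,3},{0,1,2,3}} : Finset (Finset (Fin 4))) →
        τ.filter (fun j => rnk (τ.erase j) = rnk τ) = ∅ := by decide
    exact key σ hσ
  rw [this, Finset.sum_empty]

lemma bdry_full : dualBdry H {0,1,2,3} =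
    Finsupp.single {1,2,3} (1 : ZMod 2) + Finsupp.single {0,2,3} 1 +
    Finsupp.single {0,1,3} 1 + Finsupp.single {0,1,2} 1 := by
  rw [bdry_eq H hH, show ({0,1,2,3} : Finset (Fin 4)).filter
    (fun j => rnk (({0,1,2,3} : Finset (Fin 4)).erase j) = rnk {0,1,2,3}) = {0,1,2,3} by decide]
  rw [show ({0,1,2,3} : Finset (Fin 4)) = insert 0 (insert 1 (insert 2 {3})) from rfl]
  rw [Finset.sum_insert (by decide), Finset.sum_insert (by decide),
    Finset.sum_insert (by decide), Finset.sum_singleton,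
    show ({0,1,2,3} : Finset (Fin 4)).erase 0 = {1,2,3} by decide,
    show ({0,1,2,3} : Finset (Fin 4)).erase 1 = {0,2,3} by decide,
    show ({0,1,2,3} : Finset (Fin 4)).erase 2 = {0,1,3} by decide,
    show ({0,1,2,3} : Finset (Fin 4)).erase 3 = {0,1,2} by decide]
  abel
end



lemma finset_cases (σ : Finset (Fin 4)) : σ = ∅ ∨ σ = {0} ∨ σ = {1} ∨ σ = {2} ∨ σ = {3} ∨
    σ = {0,1} ∨ σ = {0,2} ∨ σ = {0,3} ∨ σ = {1,2} ∨ σ = {1,3} ∨ σ = {2,3} ∨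
    σ = {0,1,2} ∨ σ = {0,1,3} ∨ σ = {0,2,3} ∨ σ = {1,2,3} ∨ σ = {0,1,2,3} := by
  revert σ; decide

lemma z2 : ∀ a b : ZMod 2, a + b = 0 ↔ a = b := by decide

section
variable (H : Fin 4 → Submodule ℝ (Fin 4 → ℝ)) (hH : ∀ i, (H i : Set (Fin 4 → ℝ)) = planeSet i)
include hH

lemma dualD_eq (x : Finset (Fin 4) →₀ ZMod 2) :
    dualD H x = (x {0,1,2} + x {0,2,3}) • Finsupp.single {0,2} (1 : ZMod 2)
      + (x {0,1,3} + x {1,2,3}) • Finsupp.single {1,3} (1 : ZMod 2)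
      + x {0,1,2,3} • (Finsupp.single {1,2,3} (1 : ZMod 2) + Finsupp.single {0,2,3} 1
          + Finsupp.single {0,1,3} 1 + Finsupp.single {0,1,2} 1) := by
  have h0 : dualD H x = ∑ σ : Finset (Fin 4), x σ • dualBdry H σ := by
    rw [dualD, Finsupp.lsum_apply]
    rw [Finsupp.sum_fintype]
    · simp only [LinearMap.toSpanSingleton_apply]
    · intro σ; simp
  rw [h0, ← Finset.sum_subset
    (Finset.subset_univ ({{0,1,2},{0,2,3},{0,1,3},{1,2,3},{0,1,2,3}} : Finset (Finset (Fin 4))))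
    (fun σ _ hσ => by rw [bdry_zero H hH σ hσ, smul_zero])]
  rw [show ({{0,1,2},{0,2,3},{0,1,3},{1,2,3},{0,1,2,3}} : Finset (Finset (Fin 4)))
    = insert {0,1,2} (insert {0,2,3} (insert {0,1,3} (insert {1,2,3} {{0,1,2,3}}))) from rfl]
  rw [Finset.sum_insert (by decide), Finset.sum_insert (by decide), Finset.sum_insert (by decide),
    Finset.sum_insert (by decide), Finset.sum_singleton]
  rw [bdry_t012 H hH, bdry_t023 H hH, bdry_t013 H hH, bdry_t123 H hH, bdry_full H hH]
  module

lemma dualD_single (σ : Finset (Fin 4)) (c : ZMod 2) :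
    dualD H (Finsupp.single σ c) = c • dualBdry H σ := by
  rw [dualD, Finsupp.lsum_single, LinearMap.toSpanSingleton_apply]

lemma mem_ker_iff (x : Finset (Fin 4) →₀ ZMod 2) :
    x ∈ LinearMap.ker (dualD H) ↔
      x {0,1,2} = x {0,2,3} ∧ x {0,1,3} = x {1,2,3} ∧ x {0,1,2,3} = 0 := by
  rw [LinearMap.mem_ker, dualD_eq H hH]
  constructor
  · intro h
    have e1 := DFunLike.congr_fun h ({0,2} : Finset (Fin 4))
    have e2 := DFunLike.congr_fun h ({1,3} : Finset (Fin 4))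
    have e3 := DFunLike.congr_fun h ({0,1,2} : Finset (Fin 4))
    simp (config := { decide := true }) [Finsupp.single_apply] at e1 e2 e3
    exact ⟨(z2 _ _).mp e1, (z2 _ _).mp e2, e3⟩
  · rintro ⟨h1, h2, h3⟩
    rw [← h1, ← h2, h3]
    simp [CharTwo.add_self_eq_zero]

lemma mem_comp_iff (k : ℤ) (x : Finset (Fin 4) →₀ ZMod 2) :
    x ∈ dualComp H k ↔ ∀ σ, ddeg σ ≠ k → x σ = 0 := by
  have hs : {σ | dualDeg H σ = k} = {σ | ddeg σ = k} := by
    ext σ; simp [deg_eq H hH]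
  rw [dualComp, hs, Finsupp.mem_supported']
  exact Iff.rfl

lemma comp_bot (k : ℤ) (hk : ∀ σ : Finset (Fin 4), ddeg σ ≠ k) : dualComp H k = ⊥ := by
  rw [eq_bot_iff]
  intro x hx
  rw [mem_comp_iff H hH] at hx
  simp only [Submodule.mem_bot]
  ext σ
  exact hx σ (hk σ)

lemma part3 : ∀ k : ℤ, 2 ≤ k → Subsingleton (dualH H k) := by
  intro k hk
  rw [Submodule.Quotient.subsingleton_iff, eq_top_iff]
  rintro ⟨x, hx⟩ -
  obtain ⟨hxc, hxk⟩ := Submodule.mem_inf.mp hx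
  simp only [Submodule.mem_comap, Submodule.coe_subtype]
  rcases eq_or_lt_of_le hk with rfl | hk3
  · -- k = 2
    refine Submodule.mem_inf.mpr ⟨hxc, Submodule.mem_map.mpr
      ⟨Finsupp.single {0,1,2} (x {0,2}) + Finsupp.single {0,1,3} (x {1,3}), ?_, ?_⟩⟩
    · rw [mem_comp_iff H hH]
      intro σ hσ
      by_cases h1 : σ = {0,1,2}
      · subst h1; exact absurd (by decide) hσ
      by_cases h2 : σ = {0,1,3}
      · subst h2; exact absurd (by decide) hσ
      simp [Finsupp.single_apply, Ne.symm h1, Ne.symm h2]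
    · rw [map_add, dualD_single H hH, dualD_single H hH, bdry_t012 H hH, bdry_t013 H hH]
      ext τ
      rcases finset_cases τ with h|h|h|h|h|h|h|h|h|h|h|h|h|h|h|h <;> subst h <;>
        simp (config := { decide := true }) [Finsupp.single_apply] <;>
        exact ((mem_comp_iff H hH 2 x).mp hxc _ (by decide)).symm
  · -- k ≥ 3
    have hcomp : dualComp H k = ⊥ := by
      refine comp_bot H hH k fun σ => ?_
      have hd : ∀ σ : Finset (Fin 4), 0 ≤ ddeg σ ∧ ddeg σ ≤ 2 := by decide
      have := hd σ
      omega
    rw [hcomp, Submodule.mem_bot] at hxc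
    rw [hxc]
    exact (dualB H k).zero_mem

lemma part1 : Nonempty (dualH H 0 ≃ₗ[ZMod 2] ZMod 2) := by
  have hBbot : dualB H 0 = ⊥ := by
    have hc : dualComp H (0 - 1) = ⊥ := by
      refine comp_bot H hH _ fun σ => ?_
      have hd : ∀ σ : Finset (Fin 4), 0 ≤ ddeg σ := by decide
      have := hd σ
      omega
    rw [dualB, hc, Submodule.map_bot, inf_bot_eq]
  have hkey : ∀ x ∈ dualZ H 0, x = Finsupp.single ∅ (x ∅) := by
    intro x hx
    obtain ⟨hxc, hxk⟩ := Submodule.mem_inf.mp hx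
    rw [mem_ker_iff H hH] at hxk
    ext τ
    rcases finset_cases τ with h|h|h|h|h|h|h|h|h|h|h|h|h|h|h|h <;> subst h <;>
      simp (config := { decide := true }) [Finsupp.single_apply] <;>
      first
        | exact hxk.2.2
        | exact (mem_comp_iff H hH 0 x).mp hxc _ (by decide)
  let φ0 : ↥(dualZ H 0) →ₗ[ZMod 2] ZMod 2 := (Finsupp.lapply ∅) ∘ₗ (dualZ H 0).subtype
  have hbij : Function.Bijective φ0 := by
    constructor
    · intro a b hab
      apply Subtype.ext
      rw [hkey _ a.2, hkey _ b.2, show (a : Finset (Fin 4) →₀ ZMod 2) ∅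
        = (b : Finset (Fin 4) →₀ ZMod 2) ∅ from hab]
    · intro c
      have hmem : Finsupp.single ∅ c ∈ dualZ H 0 := by
        refine Submodule.mem_inf.mpr ⟨?_, ?_⟩
        · rw [mem_comp_iff H hH]
          intro σ hσ
          by_cases h1 : σ = ∅
          · subst h1; exact absurd (by decide) hσ
          simp [Finsupp.single_apply, Ne.symm h1]
        · rw [mem_ker_iff H hH]
          simp (config := { decide := true }) [Finsupp.single_apply]
      exact ⟨⟨Finsupp.single ∅ c, hmem⟩, by simp [φ0]⟩
  exact ⟨(Submodule.quotEquivOfEqBot _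
    (by rw [hBbot, Submodule.comap_bot, Submodule.ker_subtype])).trans
    (LinearEquiv.ofBijective φ0 hbij)⟩

end

noncomputable def phi9 : (Finset (Fin 4) →₀ ZMod 2) →ₗ[ZMod 2] (Fin 9 → ZMod 2) :=
  LinearMap.pi ![Finsupp.lapply {0}, Finsupp.lapply {1}, Finsupp.lapply {2}, Finsupp.lapply {3},
    Finsupp.lapply {0,1}, Finsupp.lapply {1,2}, Finsupp.lapply {2,3}, Finsupp.lapply {0,3},
    Finsupp.lapply {0,1,2} + Finsupp.lapply {0,1,3}]

section
variable (H : Fin 4 → Submodule ℝ (Fin 4 → ℝ)) (hH : ∀ i, (H i : Set (Fin 4 → ℝ)) = planeSet i)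
include hH

omit hH in
lemma phi9_apply (x : Finset (Fin 4) →₀ ZMod 2) :
    phi9 x = ![x {0}, x {1}, x {2}, x {3}, x {0,1}, x {1,2}, x {2,3}, x {0,3},
      x {0,1,2} + x {0,1,3}] := by
  funext j
  fin_cases j <;> simp [phi9, LinearMap.pi_apply] <;> rfl

lemma part2 : Nonempty (dualH H 1 ≃ₗ[ZMod 2] (Fin 9 → ZMod 2)) := by
  classical
  let ψ : ↥(dualZ H 1) →ₗ[ZMod 2] (Fin 9 → ZMod 2) := phi9 ∘ₗ (dualZ H 1).subtype
  have hker : LinearMap.ker ψ = Submodule.comap (dualZ H 1).subtype (dualB H 1) := by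
    ext ⟨x, hx⟩
    obtain ⟨hxc, hxk0⟩ := Submodule.mem_inf.mp hx
    have hxk := (mem_ker_iff H hH x).mp hxk0
    simp only [LinearMap.mem_ker, Submodule.mem_comap, Submodule.coe_subtype]
    have hpsi : ψ ⟨x, hx⟩ = phi9 x := rfl
    rw [hpsi]
    constructor
    · intro h
      have e0 : x {0} = 0 := congrFun h 0
      have e1 : x {1} = 0 := congrFun h 1
      have e2 : x {2} = 0 := congrFun h 2
      have e3 : x {3} = 0 := congrFun h 3
      have e4 : x {0,1} = 0 := congrFun h 4
      have e5 : x {1,2} = 0 := congrFun h 5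
      have e6 : x {2,3} = 0 := congrFun h 6
      have e7 : x {0,3} = 0 := congrFun h 7
      have e8 : x {0,1,2} + x {0,1,3} = 0 := congrFun h 8
      have h13 : x {0,1,3} = x {0,1,2} := ((z2 _ _).mp e8).symm
      refine Submodule.mem_inf.mpr ⟨hxc, Submodule.mem_map.mpr
        ⟨Finsupp.single {0,1,2,3} (x {0,1,2}), ?_, ?_⟩⟩
      · rw [mem_comp_iff H hH]
        intro σ hσ
        by_cases h1 : σ = {0,1,2,3}
        · subst h1; exact absurd (by decide) hσ
        simp [Finsupp.single_apply, Ne.symm h1]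
      · rw [dualD_single H hH, bdry_full H hH]
        ext τ
        rcases finset_cases τ with h|h|h|h|h|h|h|h|h|h|h|h|h|h|h|h <;> subst h <;>
          simp (config := { decide := true }) [Finsupp.single_apply] <;>
          first
            | exact e0.symm
            | exact e1.symm
            | exact e2.symm
            | exact e3.symm
            | exact e4.symm
            | exact e5.symm
            | exact e6.symm
            | exact e7.symm
            | exact ((mem_comp_iff H hH 1 x).mp hxc _ (by decide)).symm
            | exact h13.symm
            | exact h13
            | exact hxk.1
            | exact hxk.1.symm
            | exact h13.symm.trans hxk.2.1
            | exact (h13.symm.trans hxk.2.1).symm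
            | exact hxk.2.2
            | exact hxk.2.2.symm
    · intro hmem
      obtain ⟨-, hmap⟩ := Submodule.mem_inf.mp hmem
      obtain ⟨y, hy, hxy⟩ := Submodule.mem_map.mp hmap
      rw [mem_comp_iff H hH] at hy
      have hy1 : y {0,1,2} = 0 := hy _ (by decide)
      have hy2 : y {0,2,3} = 0 := hy _ (by decide)
      have hy3 : y {0,1,3} = 0 := hy _ (by decide)
      have hy4 : y {1,2,3} = 0 := hy _ (by decide)
      have hxeq : x = y {0,1,2,3} • (Finsupp.single {1,2,3} (1 : ZMod 2)
          + Finsupp.single {0,2,3} 1 + Finsupp.single {0,1,3} 1 + Finsupp.single {0,1,2} 1) := by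
        rw [← hxy, dualD_eq H hH, hy1, hy2, hy3, hy4]
        simp
      have kz : ∀ τ : Finset (Fin 4), τ ≠ {1,2,3} → τ ≠ {0,2,3} → τ ≠ {0,1,3} → τ ≠ {0,1,2} →
          x τ = 0 := by
        intro τ h1 h2 h3 h4
        rw [hxeq]
        simp [Finsupp.single_apply, Ne.symm h1, Ne.symm h2, Ne.symm h3, Ne.symm h4]
      have kta : x {0,1,2} = y {0,1,2,3} := by
        rw [hxeq]; simp (config := { decide := true }) [Finsupp.single_apply]
      have ktb : x {0,1,3} = y {0,1,2,3} := by
        rw [hxeq]; simp (config := { decide := true }) [Finsupp.single_apply]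
      funext j
      fin_cases j
      · exact kz {0} (by decide) (by decide) (by decide) (by decide)
      · exact kz {1} (by decide) (by decide) (by decide) (by decide)
      · exact kz {2} (by decide) (by decide) (by decide) (by decide)
      · exact kz {3} (by decide) (by decide) (by decide) (by decide)
      · exact kz {0,1} (by decide) (by decide) (by decide) (by decide)
      · exact kz {1,2} (by decide) (by decide) (by decide) (by decide)
      · exact kz {2,3} (by decide) (by decide) (by decide) (by decide)
      · exact kz {0,3} (by decide) (by decide) (by decide) (by decide)
      · show x {0,1,2} + x {0,1,3} = 0
        rw [kta, ktb, CharTwo.add_self_eq_zero]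
  have hsurj : Function.Surjective ψ := by
    intro y
    set x : Finset (Fin 4) →₀ ZMod 2 :=
      Finsupp.single {0} (y 0) + Finsupp.single {1} (y 1) + Finsupp.single {2} (y 2)
      + Finsupp.single {3} (y 3) + Finsupp.single {0,1} (y 4) + Finsupp.single {1,2} (y 5)
      + Finsupp.single {2,3} (y 6) + Finsupp.single {0,3} (y 7)
      + Finsupp.single {0,1,2} (y 8) + Finsupp.single {0,2,3} (y 8) with hxdef
    have hxval : ∀ τ : Finset (Fin 4), x τ =
        (if ({0} : Finset (Fin 4)) = τ then y 0 else 0) + (if ({1} : Finset (Fin 4)) = τ then y 1 else 0)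
        + (if ({2} : Finset (Fin 4)) = τ then y 2 else 0) + (if ({3} : Finset (Fin 4)) = τ then y 3 else 0)
        + (if ({0,1} : Finset (Fin 4)) = τ then y 4 else 0) + (if ({1,2} : Finset (Fin 4)) = τ then y 5 else 0)
        + (if ({2,3} : Finset (Fin 4)) = τ then y 6 else 0) + (if ({0,3} : Finset (Fin 4)) = τ then y 7 else 0)
        + (if ({0,1,2} : Finset (Fin 4)) = τ then y 8 else 0) + (if ({0,2,3} : Finset (Fin 4)) = τ then y 8 else 0) := by
      intro τ
      simp [hxdef, Finsupp.single_apply]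
    have hxmem : x ∈ dualZ H 1 := by
      refine Submodule.mem_inf.mpr ⟨?_, ?_⟩
      · rw [mem_comp_iff H hH]
        intro σ hσ
        rcases finset_cases σ with h|h|h|h|h|h|h|h|h|h|h|h|h|h|h|h <;> subst h <;>
          first
            | exact absurd (by decide) hσ
            | (rw [hxval]; simp (config := { decide := true }))
      · rw [mem_ker_iff H hH]
        refine ⟨?_, ?_, ?_⟩ <;> simp only [hxval] <;> simp (config := { decide := true })
    refine ⟨⟨x, hxmem⟩, ?_⟩
    have hpsi : ψ ⟨x, hxmem⟩ = phi9 x := rfl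
    rw [hpsi]
    funext j
    fin_cases j
    · show x {0} = y 0
      rw [hxval]; simp (config := { decide := true })
    · show x {1} = y 1
      rw [hxval]; simp (config := { decide := true })
    · show x {2} = y 2
      rw [hxval]; simp (config := { decide := true })
    · show x {3} = y 3
      rw [hxval]; simp (config := { decide := true })
    · show x {0,1} = y 4
      rw [hxval]; simp (config := { decide := true })
    · show x {1,2} = y 5
      rw [hxval]; simp (config := { decide := true })
    · show x {2,3} = y 6
      rw [hxval]; simp (config := { decide := true })
    · show x {0,3} = y 7
      rw [hxval]; simp (config := { decide := true })
    · show x {0,1,2} + x {0,1,3} = y 8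
      rw [hxval, hxval]; simp (config := { decide := true })
  exact ⟨(Submodule.quotEquivOfEq _ _ hker.symm).trans (ψ.quotKerEquivOfSurjective hsurj)⟩

end

/-- The mod 2 cohomology of the DGA `D̃` of the four-plane example:
`H⁰ ≅ ℤ/2`, `H¹ ≅ (ℤ/2)⁹`, `H^k = 0` for `k ≥ 2`. -/
theorem stmt_13 (H : Fin 4 → Submodule ℝ (Fin 4 → ℝ))
    (hH : ∀ i, (H i : Set (Fin 4 → ℝ)) = planeSet i) :
    Nonempty (dualH H 0 ≃ₗ[ZMod 2] ZMod 2) ∧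
    Nonempty (dualH H 1 ≃ₗ[ZMod 2] (Fin 9 → ZMod 2)) ∧
    (∀ k : ℤ, 2 ≤ k → Subsingleton (dualH H k)) := by
  exact ⟨part1 H hH, part2 H hH, part3 H hH⟩
end

section
/- In the DGA D̃ of the four-plane example over Z/2, all products of positive-degree cohomology classes vanish: for any two subsets σ, τ ⊆ {1,2,3,4} that are cocycles of degree ≥ 1 whose product σ∘τ is defined (σ∘τ = σ∪τ if join(σ)+join(τ) = R^4, else 0), the resulting class in H^*(D̃) is zero. -/
open Classical Finset Module

/-- The product of `D̃` on basis elements: `σ∘τ = σ∪τ` if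
`join(σ) + join(τ) = W`, and `0` otherwise. -/
noncomputable def dualMulAux {W : Type*} [AddCommGroup W] [Module ℝ W] {N : ℕ}
    (H : Fin N → Submodule ℝ W) (σ τ : Finset (Fin N)) : Finset (Fin N) →₀ ZMod 2 :=
  if σ.inf H ⊔ τ.inf H = ⊤ then Finsupp.single (σ ∪ τ) (1 : ZMod 2) else 0

/-- The product of `D̃`, extended bilinearly. -/
noncomputable def dualMul {W : Type*} [AddCommGroup W] [Module ℝ W] {N : ℕ}
    (H : Fin N → Submodule ℝ W) :
    (Finset (Fin N) →₀ ZMod 2) →ₗ[ZMod 2]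
      (Finset (Fin N) →₀ ZMod 2) →ₗ[ZMod 2] (Finset (Fin N) →₀ ZMod 2) :=
  Finsupp.lsum (ZMod 2) fun σ =>
    LinearMap.toSpanSingleton (ZMod 2) _
      (Finsupp.lsum (ZMod 2) fun τ =>
        LinearMap.toSpanSingleton (ZMod 2) (Finset (Fin N) →₀ ZMod 2)
          (dualMulAux H σ τ))

/-! ### Auxiliary lemmas -/

/-- A hyperplane `{v | v a = c * v b}`. -/
noncomputable def hypK (c : ℝ) (a b : Fin 4) : Submodule ℝ (Fin 4 → ℝ) :=
  LinearMap.ker ((LinearMap.proj a : (Fin 4 → ℝ) →ₗ[ℝ] ℝ) - c • LinearMap.proj b)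

lemma mem_hypK {c : ℝ} {a b : Fin 4} {v : Fin 4 → ℝ} (hv : v a = c * v b) : v ∈ hypK c a b := by
  simp [hypK, LinearMap.mem_ker, hv]

lemma hypK_ne_top (c : ℝ) {a b : Fin 4} (hab : a ≠ b) : hypK c a b ≠ ⊤ := by
  intro h
  have := Submodule.eq_top_iff'.mp h (fun j => if j = a then 1 else 0)
  simp [hypK, LinearMap.mem_ker, if_neg (Ne.symm hab)] at this

section Aux
variable (H : Fin 4 → Submodule ℝ (Fin 4 → ℝ)) (hH : ∀ i, (H i : Set (Fin 4 → ℝ)) = planeSet i)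
include hH

lemma memH0 (v : Fin 4 → ℝ) : v ∈ H 0 ↔ (v 0 = v 2 ∧ v 1 = v 3) := Set.ext_iff.mp (hH 0) v
lemma memH1 (v : Fin 4 → ℝ) : v ∈ H 1 ↔ (v 0 = v 2 ∧ v 1 = -v 3) := Set.ext_iff.mp (hH 1) v
lemma memH2 (v : Fin 4 → ℝ) : v ∈ H 2 ↔ (v 0 = -v 2 ∧ v 1 = -v 3) := Set.ext_iff.mp (hH 2) v
lemma memH3 (v : Fin 4 → ℝ) : v ∈ H 3 ↔ (v 0 = -v 2 ∧ v 1 = v 3) := Set.ext_iff.mp (hH 3) v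

lemma sup_top_classify (i k : Fin 4) (htop : H i ⊔ H k = ⊤) :
    (i = 0 ∧ k = 2) ∨ (i = 2 ∧ k = 0) ∨ (i = 1 ∧ k = 3) ∨ (i = 3 ∧ k = 1) := by
  have hA0 : H 0 ≤ hypK 1 0 2 := fun v hv => by
    rw [memH0 H hH] at hv; exact mem_hypK (by linarith [hv.1])
  have hA1 : H 1 ≤ hypK 1 0 2 := fun v hv => by
    rw [memH1 H hH] at hv; exact mem_hypK (by linarith [hv.1])
  have hA2 : H 2 ≤ hypK (-1) 0 2 := fun v hv => by
    rw [memH2 H hH] at hv; exact mem_hypK (by linarith [hv.1])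
  have hA3 : H 3 ≤ hypK (-1) 0 2 := fun v hv => by
    rw [memH3 H hH] at hv; exact mem_hypK (by linarith [hv.1])
  have hB0 : H 0 ≤ hypK 1 1 3 := fun v hv => by
    rw [memH0 H hH] at hv; exact mem_hypK (by linarith [hv.2])
  have hB3 : H 3 ≤ hypK 1 1 3 := fun v hv => by
    rw [memH3 H hH] at hv; exact mem_hypK (by linarith [hv.2])
  have hB1 : H 1 ≤ hypK (-1) 1 3 := fun v hv => by
    rw [memH1 H hH] at hv; exact mem_hypK (by linarith [hv.2])
  have hB2 : H 2 ≤ hypK (-1) 1 3 := fun v hv => by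
    rw [memH2 H hH] at hv; exact mem_hypK (by linarith [hv.2])
  have e02 : (0 : Fin 4) ≠ 2 := by decide
  have e13 : (1 : Fin 4) ≠ 3 := by decide
  fin_cases i <;> fin_cases k <;>
    first
    | decide
    | exact absurd htop (ne_top_of_le_ne_top (hypK_ne_top 1 e02) (sup_le hA0 hA0))
    | exact absurd htop (ne_top_of_le_ne_top (hypK_ne_top 1 e02) (sup_le hA0 hA1))
    | exact absurd htop (ne_top_of_le_ne_top (hypK_ne_top 1 e02) (sup_le hA1 hA0))
    | exact absurd htop (ne_top_of_le_ne_top (hypK_ne_top 1 e02) (sup_le hA1 hA1))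
    | exact absurd htop (ne_top_of_le_ne_top (hypK_ne_top (-1) e02) (sup_le hA2 hA2))
    | exact absurd htop (ne_top_of_le_ne_top (hypK_ne_top (-1) e02) (sup_le hA2 hA3))
    | exact absurd htop (ne_top_of_le_ne_top (hypK_ne_top (-1) e02) (sup_le hA3 hA2))
    | exact absurd htop (ne_top_of_le_ne_top (hypK_ne_top (-1) e02) (sup_le hA3 hA3))
    | exact absurd htop (ne_top_of_le_ne_top (hypK_ne_top 1 e13) (sup_le hB0 hB3))
    | exact absurd htop (ne_top_of_le_ne_top (hypK_ne_top 1 e13) (sup_le hB3 hB0))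
    | exact absurd htop (ne_top_of_le_ne_top (hypK_ne_top (-1) e13) (sup_le hB1 hB2))
    | exact absurd htop (ne_top_of_le_ne_top (hypK_ne_top (-1) e13) (sup_le hB2 hB1))

lemma inf02 : H 0 ⊓ H 2 = ⊥ := by
  rw [eq_bot_iff]
  intro v hv
  rw [Submodule.mem_inf, memH0 H hH, memH2 H hH] at hv
  obtain ⟨⟨a1, a2⟩, b1, b2⟩ := hv
  have : v = 0 := by funext j; fin_cases j <;> (simp; linarith)
  simp [this]

lemma inf13 : H 1 ⊓ H 3 = ⊥ := by
  rw [eq_bot_iff]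
  intro v hv
  rw [Submodule.mem_inf, memH1 H hH, memH3 H hH] at hv
  obtain ⟨⟨a1, a2⟩, b1, b2⟩ := hv
  have : v = 0 := by funext j; fin_cases j <;> (simp; linarith)
  simp [this]

lemma inf01 : H 0 ⊓ H 1 ≠ ⊥ := by
  intro h
  have : (![1,0,1,0] : Fin 4 → ℝ) ∈ H 0 ⊓ H 1 := by
    rw [Submodule.mem_inf, memH0 H hH, memH1 H hH]; simp
  rw [h, Submodule.mem_bot] at this
  have := congrFun this 0
  norm_num at this

lemma inf12 : H 1 ⊓ H 2 ≠ ⊥ := by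
  intro h
  have : (![0,1,0,-1] : Fin 4 → ℝ) ∈ H 1 ⊓ H 2 := by
    rw [Submodule.mem_inf, memH1 H hH, memH2 H hH]; simp
  rw [h, Submodule.mem_bot] at this
  have := congrFun this 1
  norm_num at this

lemma inf03 : H 0 ⊓ H 3 ≠ ⊥ := by
  intro h
  have : (![0,1,0,1] : Fin 4 → ℝ) ∈ H 0 ⊓ H 3 := by
    rw [Submodule.mem_inf, memH0 H hH, memH3 H hH]; simp
  rw [h, Submodule.mem_bot] at this
  have := congrFun this 1
  norm_num at this

lemma inf012_bot : ({0,1,2} : Finset (Fin 4)).inf H = ⊥ := by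
  have h1 : ({0,1,2} : Finset (Fin 4)).inf H ≤ H 0 ⊓ H 2 :=
    le_inf (Finset.inf_le (by decide)) (Finset.inf_le (by decide))
  rw [inf02 H hH] at h1
  exact le_bot_iff.mp h1

lemma inf013_bot : ({0,1,3} : Finset (Fin 4)).inf H = ⊥ := by
  have h1 : ({0,1,3} : Finset (Fin 4)).inf H ≤ H 1 ⊓ H 3 :=
    le_inf (Finset.inf_le (by decide)) (Finset.inf_le (by decide))
  rw [inf13 H hH] at h1
  exact le_bot_iff.mp h1

lemma bdry012 : dualBdry H ({0,1,2} : Finset (Fin 4)) =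
    Finsupp.single ({0,2} : Finset (Fin 4)) 1 := by
  have hfil : ({0,1,2} : Finset (Fin 4)).filter
      (fun j => (({0,1,2} : Finset (Fin 4)).erase j).inf H
        = ({0,1,2} : Finset (Fin 4)).inf H) = {1} := by
    ext j
    simp only [Finset.mem_filter, Finset.mem_singleton]
    constructor
    · rintro ⟨hj, hcond⟩
      rw [inf012_bot H hH] at hcond
      simp only [Finset.mem_insert, Finset.mem_singleton] at hj
      rcases hj with rfl | rfl | rfl
      · rw [show (({0,1,2} : Finset (Fin 4)).erase 0) = ({1,2} : Finset (Fin 4)) from by decide] at hcond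
        simp only [Finset.inf_insert, Finset.inf_singleton] at hcond
        exact absurd hcond (inf12 H hH)
      · rfl
      · rw [show (({0,1,2} : Finset (Fin 4)).erase 2) = ({0,1} : Finset (Fin 4)) from by decide] at hcond
        simp only [Finset.inf_insert, Finset.inf_singleton] at hcond
        exact absurd hcond (inf01 H hH)
    · rintro rfl
      refine ⟨by decide, ?_⟩
      rw [show (({0,1,2} : Finset (Fin 4)).erase 1) = ({0,2} : Finset (Fin 4)) from by decide,
        inf012_bot H hH]
      simp only [Finset.inf_insert, Finset.inf_singleton]
      exact inf02 H hH
  rw [dualBdry, hfil, Finset.sum_singleton,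
    show (({0,1,2} : Finset (Fin 4)).erase 1) = ({0,2} : Finset (Fin 4)) from by decide]

lemma bdry013 : dualBdry H ({0,1,3} : Finset (Fin 4)) =
    Finsupp.single ({1,3} : Finset (Fin 4)) 1 := by
  have hfil : ({0,1,3} : Finset (Fin 4)).filter
      (fun j => (({0,1,3} : Finset (Fin 4)).erase j).inf H
        = ({0,1,3} : Finset (Fin 4)).inf H) = {0} := by
    ext j
    simp only [Finset.mem_filter, Finset.mem_singleton]
    constructor
    · rintro ⟨hj, hcond⟩
      rw [inf013_bot H hH] at hcond
      simp only [Finset.mem_insert, Finset.mem_singleton] at hj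
      rcases hj with rfl | rfl | rfl
      · rfl
      · rw [show (({0,1,3} : Finset (Fin 4)).erase 1) = ({0,3} : Finset (Fin 4)) from by decide] at hcond
        simp only [Finset.inf_insert, Finset.inf_singleton] at hcond
        exact absurd hcond (inf03 H hH)
      · rw [show (({0,1,3} : Finset (Fin 4)).erase 3) = ({0,1} : Finset (Fin 4)) from by decide] at hcond
        simp only [Finset.inf_insert, Finset.inf_singleton] at hcond
        exact absurd hcond (inf01 H hH)
    · rintro rfl
      refine ⟨by decide, ?_⟩
      rw [show (({0,1,3} : Finset (Fin 4)).erase 0) = ({1,3} : Finset (Fin 4)) from by decide,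
        inf013_bot H hH]
      simp only [Finset.inf_insert, Finset.inf_singleton]
      exact inf13 H hH
  rw [dualBdry, hfil, Finset.sum_singleton,
    show (({0,1,3} : Finset (Fin 4)).erase 0) = ({1,3} : Finset (Fin 4)) from by decide]

end Aux

lemma mul_single {W : Type*} [AddCommGroup W] [Module ℝ W] {N : ℕ}
    (H : Fin N → Submodule ℝ W) (σ τ : Finset (Fin N)) :
    dualMul H (Finsupp.single σ 1) (Finsupp.single τ 1) = dualMulAux H σ τ := by
  simp [dualMul, Finsupp.lsum_single, LinearMap.toSpanSingleton_apply]

lemma d_single {W : Type*} [AddCommGroup W] [Module ℝ W] {N : ℕ}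
    (H : Fin N → Submodule ℝ W) (σ : Finset (Fin N)) :
    dualD H (Finsupp.single σ 1) = dualBdry H σ := by
  simp [dualD, Finsupp.lsum_single, LinearMap.toSpanSingleton_apply]

lemma deg_empty {W : Type*} [AddCommGroup W] [Module ℝ W] {N : ℕ}
    (H : Fin N → Submodule ℝ W) :
    dualDeg H (∅ : Finset (Fin N)) = (finrank ℝ W : ℤ) - finrank ℝ W := by
  rw [dualDeg, Finset.inf_empty, finrank_top]; simp

/-- In the DGA `D̃` of the four-plane example, the product of any two cocycles
of positive degree is a coboundary, i.e. all products of positive-degree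
cohomology classes vanish in `H^*(D̃)`. -/
theorem stmt_14 (H : Fin 4 → Submodule ℝ (Fin 4 → ℝ))
    (hH : ∀ i, (H i : Set (Fin 4 → ℝ)) = planeSet i)
    (σ τ : Finset (Fin 4)) (hσ : 1 ≤ dualDeg H σ) (hτ : 1 ≤ dualDeg H τ)
    (hcσ : dualD H (Finsupp.single σ 1) = 0)
    (hcτ : dualD H (Finsupp.single τ 1) = 0) :
    dualMul H (Finsupp.single σ 1) (Finsupp.single τ 1) ∈
      LinearMap.range (dualD H) := by
  have hneσ : σ.Nonempty := by
    rcases σ.eq_empty_or_nonempty with rfl | h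
    · rw [deg_empty] at hσ; simp at hσ
    · exact h
  have hneτ : τ.Nonempty := by
    rcases τ.eq_empty_or_nonempty with rfl | h
    · rw [deg_empty] at hτ; simp at hτ
    · exact h
  rw [mul_single, dualMulAux]
  split_ifs with htop
  · obtain ⟨i0, hi0⟩ := hneσ
    obtain ⟨k0, hk0⟩ := hneτ
    have hcl : ∀ i ∈ σ, ∀ k ∈ τ,
        (i = 0 ∧ k = 2) ∨ (i = 2 ∧ k = 0) ∨ (i = 1 ∧ k = 3) ∨ (i = 3 ∧ k = 1) := by
      intro i hi k hk
      have h1 : σ.inf H ⊔ τ.inf H ≤ H i ⊔ H k :=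
        sup_le_sup (Finset.inf_le hi) (Finset.inf_le hk)
      exact sup_top_classify H hH i k (top_le_iff.mp (htop.symm.trans_le h1))
    rcases hcl i0 hi0 k0 hk0 with ⟨hi, hk⟩ | ⟨hi, hk⟩ | ⟨hi, hk⟩ | ⟨hi, hk⟩ <;>
      subst hi <;> subst hk
    · have hσe : σ = {0} := Finset.eq_singleton_iff_unique_mem.mpr ⟨hi0, by
        intro x hx
        rcases hcl x hx _ hk0 with ⟨h1, _⟩ | ⟨_, h2⟩ | ⟨_, h2⟩ | ⟨_, h2⟩
        · exact h1
        all_goals exact absurd h2 (by decide)⟩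
      have hτe : τ = {2} := Finset.eq_singleton_iff_unique_mem.mpr ⟨hk0, by
        intro x hx
        rcases hcl _ hi0 x hx with ⟨_, h2⟩ | ⟨h1, _⟩ | ⟨h1, _⟩ | ⟨h1, _⟩
        · exact h2
        all_goals exact absurd h1 (by decide)⟩
      rw [hσe, hτe, show ({0} ∪ {2} : Finset (Fin 4)) = ({0,2} : Finset (Fin 4)) from by decide]
      exact ⟨Finsupp.single ({0,1,2} : Finset (Fin 4)) 1, by rw [d_single, bdry012 H hH]⟩
    · have hσe : σ = {2} := Finset.eq_singleton_iff_unique_mem.mpr ⟨hi0, by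
        intro x hx
        rcases hcl x hx _ hk0 with ⟨_, h2⟩ | ⟨h1, _⟩ | ⟨_, h2⟩ | ⟨_, h2⟩
        · exact absurd h2 (by decide)
        · exact h1
        all_goals exact absurd h2 (by decide)⟩
      have hτe : τ = {0} := Finset.eq_singleton_iff_unique_mem.mpr ⟨hk0, by
        intro x hx
        rcases hcl _ hi0 x hx with ⟨h1, _⟩ | ⟨_, h2⟩ | ⟨h1, _⟩ | ⟨h1, _⟩
        · exact absurd h1 (by decide)
        · exact h2
        all_goals exact absurd h1 (by decide)⟩
      rw [hσe, hτe, show ({2} ∪ {0} : Finset (Fin 4)) = ({0,2} : Finset (Fin 4)) from by decide]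
      exact ⟨Finsupp.single ({0,1,2} : Finset (Fin 4)) 1, by rw [d_single, bdry012 H hH]⟩
    · have hσe : σ = {1} := Finset.eq_singleton_iff_unique_mem.mpr ⟨hi0, by
        intro x hx
        rcases hcl x hx _ hk0 with ⟨_, h2⟩ | ⟨_, h2⟩ | ⟨h1, _⟩ | ⟨_, h2⟩
        · exact absurd h2 (by decide)
        · exact absurd h2 (by decide)
        · exact h1
        · exact absurd h2 (by decide)⟩
      have hτe : τ = {3} := Finset.eq_singleton_iff_unique_mem.mpr ⟨hk0, by
        intro x hx
        rcases hcl _ hi0 x hx with ⟨h1, _⟩ | ⟨h1, _⟩ | ⟨_, h2⟩ | ⟨h1, _⟩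
        · exact absurd h1 (by decide)
        · exact absurd h1 (by decide)
        · exact h2
        · exact absurd h1 (by decide)⟩
      rw [hσe, hτe, show ({1} ∪ {3} : Finset (Fin 4)) = ({1,3} : Finset (Fin 4)) from by decide]
      exact ⟨Finsupp.single ({0,1,3} : Finset (Fin 4)) 1, by rw [d_single, bdry013 H hH]⟩
    · have hσe : σ = {3} := Finset.eq_singleton_iff_unique_mem.mpr ⟨hi0, by
        intro x hx
        rcases hcl x hx _ hk0 with ⟨_, h2⟩ | ⟨_, h2⟩ | ⟨_, h2⟩ | ⟨h1, _⟩
        · exact absurd h2 (by decide)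
        · exact absurd h2 (by decide)
        · exact absurd h2 (by decide)
        · exact h1⟩
      have hτe : τ = {1} := Finset.eq_singleton_iff_unique_mem.mpr ⟨hk0, by
        intro x hx
        rcases hcl _ hi0 x hx with ⟨h1, _⟩ | ⟨h1, _⟩ | ⟨h1, _⟩ | ⟨_, h2⟩
        · exact absurd h1 (by decide)
        · exact absurd h1 (by decide)
        · exact absurd h1 (by decide)
        · exact h2⟩
      rw [hσe, hτe, show ({3} ∪ {1} : Finset (Fin 4)) = ({1,3} : Finset (Fin 4)) from by decide]
      exact ⟨Finsupp.single ({0,1,3} : Finset (Fin 4)) 1, by rw [d_single, bdry013 H hH]⟩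
  · exact zero_mem _
end
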